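/- Let f be a nilpotent endomorphism of a finite-dimensional k-vector space E with minimal polynomial x^n and Jordan basis ∪_{j=1}^r {e_j, f(e_j), …, f^{n_j−1}(e_j)}. Then a linear map g: E → E satisfies f∘g∘f = f if and only if there exist scalars λ_{j,i}^s and vectors w_j ∈ E such that g(f^i(e_j)) = f^{i−1}(e_j) + Σ_{s=1}^r λ_{j,i}^s f^{n_s−1}(e_s) for 1 ≤ i ≤ n_j−1, and g(e_j) = w_j for all j. -/

import Mathlib

open Finset

/-- Characterization of the generalized inverses of a nilpotent endomorphism of a
finite-dimensional space in terms of a Jordan basis made of `r` chains of lengths `n_j`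
generated by vectors `e_j`. -/
theorem stmt16 {k E : Type*} [Field k] [AddCommGroup E] [Module k E]
    [FiniteDimensional k E]
    (f : Module.End k E) (r : ℕ) (nlen : Fin r → ℕ) (e : Fin r → E)
    (hlen : ∀ j, 1 ≤ nlen j)
    (hchain : ∀ j, (f ^ (nlen j)) (e j) = 0)
    (hli : LinearIndependent k
      (fun q : Σ j : Fin r, Fin (nlen j) => (f ^ (q.2 : ℕ)) (e q.1)))
    (hspan : Submodule.span k
      (Set.range fun q : Σ j : Fin r, Fin (nlen j) => (f ^ (q.2 : ℕ)) (e q.1)) = ⊤)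
    (g : Module.End k E) :
    f * g * f = f ↔
      ∃ (lam : Fin r → ℕ → Fin r → k) (w : Fin r → E),
        (∀ j, g (e j) = w j) ∧
          ∀ j, ∀ i, 1 ≤ i → i ≤ nlen j - 1 →
            g ((f ^ i) (e j)) =
              (f ^ (i - 1)) (e j) + ∑ s, lam j i s • (f ^ (nlen s - 1)) (e s) := by
  classical
  set B : Module.Basis (Σ j : Fin r, Fin (nlen j)) k E := Module.Basis.mk hli (by rw [hspan]) with hBdef
  have hB : ∀ q : Σ j : Fin r, Fin (nlen j), B q = (f ^ (q.2 : ℕ)) (e q.1) :=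
    fun q => Module.Basis.mk_apply hli _ q
  have hstep : ∀ (j : Fin r) (m : ℕ), f ((f ^ m) (e j)) = (f ^ (m + 1)) (e j) := by
    intro j m
    rw [pow_succ', Module.End.mul_apply]
  have hpow0 : ∀ j, ∀ m, nlen j ≤ m → (f ^ m) (e j) = 0 := by
    intro j m hm
    have h1 : f ^ m = f ^ (m - nlen j) * f ^ (nlen j) := by
      rw [← pow_add]; congr 1; omega
    rw [h1, Module.End.mul_apply, hchain, map_zero]
  have key : ∀ x : E, f x = 0 → ∃ c : Fin r → k,
      x = ∑ s, c s • (f ^ (nlen s - 1)) (e s) := by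
    intro x hx
    set c := B.repr x with hc
    have hsum : x = ∑ q : Σ j : Fin r, Fin (nlen j), c q • B q := (B.sum_repr x).symm
    have hfx0 : ∑ q : Σ j : Fin r, Fin (nlen j), c q • f (B q) = 0 := by
      have : f x = f (∑ q : Σ j : Fin r, Fin (nlen j), c q • B q) := by rw [← hsum]
      rw [hx, map_sum] at this
      simp only [map_smul] at this
      exact this.symm
    have hzero : ∀ (j0 : Fin r) (i0 : Fin (nlen j0)), (i0 : ℕ) + 1 < nlen j0 →
        c ⟨j0, i0⟩ = 0 := by
      intro j0 i0 hlt
      set t : Σ j : Fin r, Fin (nlen j) := ⟨j0, ⟨(i0 : ℕ) + 1, hlt⟩⟩ with ht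
      have h0 : ∑ q : Σ j : Fin r, Fin (nlen j), c q • (B.coord t) (f (B q)) = 0 := by
        have : (B.coord t) (∑ q : Σ j : Fin r, Fin (nlen j), c q • f (B q))
            = ∑ q : Σ j : Fin r, Fin (nlen j), c q • (B.coord t) (f (B q)) := by
          rw [map_sum]; simp only [map_smul, smul_eq_mul]
        rw [← this, hfx0, map_zero]
      rw [Finset.sum_eq_single (⟨j0, i0⟩ : Σ j : Fin r, Fin (nlen j))] at h0
      · have hft : f (B ⟨j0, i0⟩) = B t := by
          rw [hB, hB]; exact hstep j0 i0
        rw [hft] at h0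
        simpa [Module.Basis.coord_apply, Module.Basis.repr_self] using h0
      · rintro ⟨j, i⟩ - hne
        by_cases h1 : (i : ℕ) + 1 < nlen j
        · have hft : f (B ⟨j, i⟩) = B ⟨j, ⟨(i : ℕ) + 1, h1⟩⟩ := by
            rw [hB, hB]; exact hstep j i
          rw [hft]
          have hne2 : (⟨j, ⟨(i : ℕ) + 1, h1⟩⟩ : Σ j : Fin r, Fin (nlen j)) ≠ t := by
            intro hEq
            apply hne
            obtain ⟨hj, hi⟩ := Sigma.mk.inj_iff.mp hEq
            subst hj
            have hi' := eq_of_heq hi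
            have : (i : ℕ) = (i0 : ℕ) := by
              have := congrArg (fun z : Fin (nlen j) => (z : ℕ)) hi'
              simpa using this
            simp [Fin.ext_iff, this]
          simp [Module.Basis.coord_apply, Module.Basis.repr_self, Finsupp.single_apply, hne2]
        · have : (i : ℕ) + 1 = nlen j := by have := i.isLt; omega
          have hft : f (B ⟨j, i⟩) = 0 := by
            rw [hB]
            show f ((f ^ (i : ℕ)) (e j)) = 0
            rw [hstep j i, this, hchain]
          rw [hft, map_zero, smul_zero]
      · intro hmem; exact absurd (Finset.mem_univ _) hmem
    refine ⟨fun s => c ⟨s, ⟨nlen s - 1, by have := hlen s; omega⟩⟩, ?_⟩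
    rw [hsum, ← Finset.univ_sigma_univ, Finset.sum_sigma]
    refine Finset.sum_congr rfl (fun j _ => ?_)
    rw [Finset.sum_eq_single (⟨nlen j - 1, by have := hlen j; omega⟩ : Fin (nlen j))]
    · rw [hB]
    · intro i _ hne
      have : (i : ℕ) + 1 < nlen j := by
        have h1 := i.isLt
        have h2 : (i : ℕ) ≠ nlen j - 1 := by
          intro h; exact hne (Fin.ext h)
        omega
      rw [hzero j i this, zero_smul]
    · intro hmem; exact absurd (Finset.mem_univ _) hmem
  constructor
  · intro h
    have hker : ∀ j, ∀ i : ℕ, 1 ≤ i → i ≤ nlen j - 1 →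
        f (g ((f ^ i) (e j)) - (f ^ (i - 1)) (e j)) = 0 := by
      intro j i h1 h2
      have hfi : (f ^ i) (e j) = f ((f ^ (i - 1)) (e j)) := by
        have hii : i - 1 + 1 = i := by omega
        rw [← hii]
        exact (hstep j (i - 1)).symm
      have hh := congrArg (fun φ : Module.End k E => φ ((f ^ (i - 1)) (e j))) h
      simp only [Module.End.mul_apply] at hh
      rw [map_sub, hfi, hh, sub_self]
    refine ⟨fun j i => if h' : 1 ≤ i ∧ i ≤ nlen j - 1 then
        Classical.choose (key _ (hker j i h'.1 h'.2)) else 0, fun j => g (e j),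
        fun j => rfl, ?_⟩
    intro j i h1 h2
    have h' : 1 ≤ i ∧ i ≤ nlen j - 1 := ⟨h1, h2⟩
    have hspec := Classical.choose_spec (key _ (hker j i h'.1 h'.2))
    simp only [dif_pos h']
    exact sub_eq_iff_eq_add'.mp hspec
  · rintro ⟨lam, w, hw, hg⟩
    apply B.ext
    rintro ⟨j, i⟩
    rw [hB]
    show f (g (f ((f ^ (i : ℕ)) (e j)))) = f ((f ^ (i : ℕ)) (e j))
    by_cases hcase : (i : ℕ) + 1 ≤ nlen j - 1
    · rw [hstep j i, hg j ((i : ℕ) + 1) (by omega) hcase]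
      rw [map_add, map_sum]
      have hz : ∀ s ∈ Finset.univ (α := Fin r),
          f (lam j ((i : ℕ) + 1) s • (f ^ (nlen s - 1)) (e s)) = 0 := by
        intro s _
        rw [map_smul, hstep s, Nat.sub_add_cancel (hlen s), hchain, smul_zero]
      rw [Finset.sum_eq_zero hz, add_zero]
      exact hstep j i
    · have hi : (i : ℕ) + 1 = nlen j := by have := i.isLt; omega
      have hz : (f ^ ((i : ℕ) + 1)) (e j) = 0 := by rw [hi]; exact hchain j
      rw [hstep j i, hz, map_zero, map_zero]
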